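/- If x₁, ..., x_k, z are positive integers with x₁ⁿ + x₂ⁿ + ... + x_kⁿ = zⁿ, and the numbers x₁ⁿ, ..., x_kⁿ, zⁿ are pairwise coprime (equivalently, setwise coprime as in the ABC-type hypothesis), and if the inequality zⁿ < rad(x₁ⁿ · x₂ⁿ · ... · x_kⁿ · zⁿ)² holds, then n < 2k + 2. -/

import Mathlib

/-- Radical: product of the distinct prime factors. -/
def rad (m : ℕ) : ℕ := ∏ p ∈ m.primeFactors, p

theorem stmt_0 (k n : ℕ) (x : Fin k → ℕ) (z : ℕ)
    (hx : ∀ i, 0 < x i) (hz : 0 < z)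
    (heq : ∑ i, x i ^ n = z ^ n)
    (hcop : (∀ i j, i ≠ j → Nat.Coprime (x i ^ n) (x j ^ n)) ∧
      ∀ i, Nat.Coprime (x i ^ n) (z ^ n))
    (habc : z ^ n < rad ((∏ i, x i ^ n) * z ^ n) ^ 2) :
    n < 2 * k + 2 := by
  rcases Nat.eq_zero_or_pos n with hn | hn
  · omega
  have hxz : ∀ i, x i ≤ z := by
    intro i
    have h1 : x i ^ n ≤ z ^ n := heq ▸ Finset.single_le_sum (f := fun j => x j ^ n)
      (fun j _ => Nat.zero_le _) (Finset.mem_univ i)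
    exact (Nat.pow_le_pow_iff_left hn.ne').mp h1
  have hprod : (∏ i, x i ^ n) * z ^ n = ((∏ i, x i) * z) ^ n := by
    rw [Finset.prod_pow, mul_pow]
  rcases eq_or_lt_of_le (Nat.succ_le_of_lt hz) with hz1 | hz1
  · have hz' : z = 1 := hz1.symm
    have hx1 : ∀ i, x i = 1 := fun i => le_antisymm (hz' ▸ hxz i) (hx i)
    have h1 : (∏ i, x i ^ n) * z ^ n = 1 := by simp [hx1, hz']
    rw [h1] at habc
    simp [rad] at habc
    omega
  · have hmpos : 0 < (∏ i, x i) * z :=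
      Nat.mul_pos (Finset.prod_pos fun i _ => hx i) hz
    have hrad : rad (((∏ i, x i) * z) ^ n) = rad ((∏ i, x i) * z) := by
      unfold rad
      rw [Nat.primeFactors_pow _ hn.ne']
    have hradle : rad ((∏ i, x i) * z) ≤ (∏ i, x i) * z :=
      Nat.le_of_dvd hmpos (Nat.prod_primeFactors_dvd _)
    have hple : (∏ i, x i) * z ≤ z ^ (k + 1) := by
      have : ∏ i, x i ≤ ∏ _i : Fin k, z :=
        Finset.prod_le_prod (fun i _ => Nat.zero_le _) (fun i _ => hxz i)
      simp only [Finset.prod_const, Finset.card_univ, Fintype.card_fin] at this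
      calc (∏ i, x i) * z ≤ z ^ k * z := Nat.mul_le_mul_right _ this
        _ = z ^ (k + 1) := (pow_succ z k).symm
    have hlt : z ^ n < z ^ (2 * k + 2) := by
      calc z ^ n < rad ((∏ i, x i ^ n) * z ^ n) ^ 2 := habc
        _ = rad ((∏ i, x i) * z) ^ 2 := by rw [hprod, hrad]
        _ ≤ ((∏ i, x i) * z) ^ 2 := Nat.pow_le_pow_left hradle 2
        _ ≤ (z ^ (k + 1)) ^ 2 := Nat.pow_le_pow_left hple 2
        _ = z ^ (2 * k + 2) := by rw [← pow_mul]; ring_nf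
    exact (Nat.pow_lt_pow_iff_right hz1).mp hlt
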